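/- Let F: I → I be a continuous, monotone decreasing map on a bounded closed interval I = [l, r] with a unique fixed point x*. Then the iterates F^n(x) converge to x* for every x ∈ I if and only if F^n(l) converges to x*. -/

import Mathlib

theorem stmt9 (l r : ℝ) (hlr : l ≤ r) (F : ℝ → ℝ)
    (hcont : ContinuousOn F (Set.Icc l r))
    (hmaps : Set.MapsTo F (Set.Icc l r) (Set.Icc l r))
    (hanti : AntitoneOn F (Set.Icc l r))
    (xs : ℝ) (hxs : xs ∈ Set.Icc l r) (hfix : F xs = xs)
    (huniq : ∀ y ∈ Set.Icc l r, F y = y → y = xs) :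
    (∀ x ∈ Set.Icc l r, Filter.Tendsto (fun n => F^[n] x) Filter.atTop (nhds xs)) ↔
      Filter.Tendsto (fun n => F^[n] l) Filter.atTop (nhds xs) := by
  constructor
  · intro h
    exact h l (Set.left_mem_Icc.mpr hlr)
  · intro hl x hx
    have hlmem : l ∈ Set.Icc l r := Set.left_mem_Icc.mpr hlr
    -- iterates stay in the interval
    have hmem : ∀ y ∈ Set.Icc l r, ∀ n, F^[n] y ∈ Set.Icc l r := by
      intro y hy n
      induction n with
      | zero => simpa using hy
      | succ n ih => rw [Function.iterate_succ_apply']; exact hmaps ih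
    -- even iterates are monotone
    have hmono : ∀ n, ∀ a ∈ Set.Icc l r, ∀ b ∈ Set.Icc l r, a ≤ b →
        F^[2*n] a ≤ F^[2*n] b := by
      intro n
      induction n with
      | zero => intro a _ b _ hab; simpa using hab
      | succ n ih =>
        intro a ha b hb hab
        have hFa := hmaps ha
        have hFb := hmaps hb
        have h1 : F b ≤ F a := hanti ha hb hab
        have h2 : F (F a) ≤ F (F b) := hanti hFb hFa h1
        have key := ih _ (hmaps hFa) _ (hmaps hFb) h2
        have e : 2*(n+1) = 2*n + 2 := by ring
        rw [e, Function.iterate_add_apply, Function.iterate_add_apply]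
        simpa [Function.iterate_succ_apply] using key
    -- subsequences of the orbit of l converge
    have hsub : ∀ (g : ℕ → ℕ), Filter.Tendsto g Filter.atTop Filter.atTop →
        Filter.Tendsto (fun n => F^[g n] l) Filter.atTop (nhds xs) := by
      intro g hg
      exact hl.comp hg
    have hg1 : Filter.Tendsto (fun n : ℕ => 2*n + 2) Filter.atTop Filter.atTop :=
      Filter.tendsto_atTop_mono (fun n => by simp; omega) Filter.tendsto_id
    have hg2 : Filter.Tendsto (fun n : ℕ => 2*n + 1) Filter.atTop Filter.atTop :=
      Filter.tendsto_atTop_mono (fun n => by simp; omega) Filter.tendsto_id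
    -- sandwich for shifted even iterates
    have hlow : ∀ n, F^[2*n + 2] l ≤ F^[2*n + 2] x := by
      intro n
      have := hmono (n+1) l hlmem x hx hx.1
      have e : 2*(n+1) = 2*n + 2 := by ring
      rwa [e] at this
    have hhigh : ∀ n, F^[2*n + 2] x ≤ F^[2*n + 1] l := by
      intro n
      have hFx := hmaps hx
      have hFFx : F (F x) ≤ F l := hanti hlmem hFx hFx.1
      have := hmono n _ (hmaps hFx) _ (hmaps hlmem) hFFx
      have e1 : (2*n + 2 : ℕ) = 2*n + 2 := rfl
      rw [show (2*n + 2 : ℕ) = 2*n + 2 from rfl, Function.iterate_add_apply,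
        show (2*n + 1 : ℕ) = 2*n + 1 from rfl, Function.iterate_add_apply]
      simpa [Function.iterate_succ_apply] using this
    have hEvenShift : Filter.Tendsto (fun n => F^[2*n + 2] x) Filter.atTop (nhds xs) :=
      tendsto_of_tendsto_of_tendsto_of_le_of_le (hsub _ hg1) (hsub _ hg2) hlow hhigh
    have hEven : Filter.Tendsto (fun n => F^[2*n] x) Filter.atTop (nhds xs) := by
      have : Filter.Tendsto (fun n => (fun m => F^[2*m] x) (n + 1)) Filter.atTop (nhds xs) := by
        simpa [Nat.mul_succ] using hEvenShift
      exact (Filter.tendsto_add_atTop_iff_nat 1).mp this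
    have hOdd : Filter.Tendsto (fun n => F^[2*n + 1] x) Filter.atTop (nhds xs) := by
      have hc : ContinuousWithinAt F (Set.Icc l r) xs := hcont xs hxs
      have hin : Filter.Tendsto (fun n => F^[2*n] x) Filter.atTop
          (nhdsWithin xs (Set.Icc l r)) :=
        tendsto_nhdsWithin_of_tendsto_nhds_of_eventually_within _ hEven
          (Filter.Eventually.of_forall fun n => hmem x hx _)
      have := hc.tendsto.comp hin
      rw [hfix] at this
      simpa [Function.comp_def, Function.iterate_succ_apply'] using this
    rw [Metric.tendsto_atTop] at hEven hOdd ⊢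
    intro ε hε
    obtain ⟨N1, h1⟩ := hEven ε hε
    obtain ⟨N2, h2⟩ := hOdd ε hε
    refine ⟨2*(N1 + N2) + 2, fun n hn => ?_⟩
    rcases Nat.even_or_odd n with ⟨k, hk⟩ | ⟨k, hk⟩
    · have : N1 ≤ k := by omega
      have := h1 k this
      rwa [show n = 2*k by omega]
    · have : N2 ≤ k := by omega
      have := h2 k this
      rwa [show n = 2*k + 1 by omega]
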